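/- Let f : ℕ → (0,∞) be an eventually non-increasing function with ∑_{n≥1} f(n) = ∞ and let E_f := {S ⊆ ℕ : lim_n (∑_{i ∈ S∩[1,n]} f(i))/(∑_{i∈[1,n]} f(i)) = 0}. Then there exist a lower semicontinuous submeasure φ on ℕ with E_f = I_φ and a strictly increasing sequence of positive integers (z_n) such that lim_n (∑_{s ∈ (z_n, z_{n+1}]} f(s))/(∑_{s ∈ [1,z_n]} f(s)) = 1 and, for every S ⊆ ℕ, ‖S‖_φ = limsup_n (∑_{s ∈ S ∩ (z_n, z_{n+1}]} f(s))/(∑_{s ∈ [1, z_{n+1}]} f(s)). -/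

import Mathlib

open Filter Topology MeasureTheory Set

noncomputable section

/-- A lower semicontinuous submeasure on `ℕ`:  `φ : P(ℕ) → [0,∞]` with `φ(∅) = 0`,
`φ({n}) < ∞`, monotone, subadditive, and `φ(A) = lim_n φ(A ∩ {0,…,n-1})`. -/
structure LSCSubmeasure where
  toFun : Set ℕ → ENNReal
  empty' : toFun ∅ = 0
  singleton_lt_top' : ∀ n : ℕ, toFun {n} < ⊤
  mono' : ∀ ⦃A B : Set ℕ⦄, A ⊆ B → toFun A ≤ toFun B
  subadd' : ∀ A B : Set ℕ, toFun (A ∪ B) ≤ toFun A + toFun B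
  lsc' : ∀ A : Set ℕ, Tendsto (fun n => toFun (A ∩ {m | m < n})) atTop (𝓝 (toFun A))

/-- `‖A‖_φ := lim_n φ(A \ {0,…,n-1})`; since the sequence is antitone, the limit
is the infimum. -/
def LSCSubmeasure.norm (φ : LSCSubmeasure) (A : Set ℕ) : ENNReal :=
  ⨅ n : ℕ, φ.toFun (A \ {m | m < n})

/-- The (analytic P-)ideal `I_φ = {A : ‖A‖_φ = 0}` associated with `φ`. -/
def LSCSubmeasure.ideal (φ : LSCSubmeasure) : Set (Set ℕ) :=
  {A | φ.norm A = 0}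

/-- `I` is an ideal on `ℕ`: closed under finite unions and subsets, contains all
finite sets, and is proper. -/
def IsIdealOnNat (I : Set (Set ℕ)) : Prop :=
  (∀ A B : Set ℕ, A ∈ I → B ∈ I → A ∪ B ∈ I) ∧
  (∀ A B : Set ℕ, A ⊆ B → B ∈ I → A ∈ I) ∧
  (∀ A : Set ℕ, A.Finite → A ∈ I) ∧
  (Set.univ : Set ℕ) ∉ I

/-- Convergence of the subsequence `(x_n : n ∈ A)` to `l`. -/
def ConvergesAlong {X : Type*} [TopologicalSpace X] (x : ℕ → X) (A : Set ℕ) (l : X) : Prop :=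
  Tendsto x (atTop ⊓ 𝓟 A) (𝓝 l)

/-- `Λ_x(I)`: the set of `I`-limit points of the sequence `x`. -/
def idealLimitPoints {X : Type*} [TopologicalSpace X] (I : Set (Set ℕ)) (x : ℕ → X) : Set X :=
  {l | ∃ A : Set ℕ, A ∉ I ∧ ConvergesAlong x A l}

/-- `Γ_x(I)`: the set of `I`-cluster points of the sequence `x`. -/
def idealClusterPoints {X : Type*} [TopologicalSpace X] (I : Set (Set ℕ)) (x : ℕ → X) : Set X :=
  {l | ∀ U ∈ 𝓝 l, {n | x n ∈ U} ∉ I}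

/-- `Λ_x(I_φ, q)`: the set of `ℓ` such that some subsequence `(x_n : n ∈ A)` with
`‖A‖_φ ≥ q` converges to `ℓ`. -/
def LambdaQ {X : Type*} [TopologicalSpace X] (φ : LSCSubmeasure) (x : ℕ → X) (q : ℝ) : Set X :=
  {l | ∃ A : Set ℕ, ENNReal.ofReal q ≤ φ.norm A ∧ ConvergesAlong x A l}

/-- The summable ideal `I_f = {S : ∑_{n ∈ S} f(n) < ∞}`. -/
def summableIdeal (f : ℕ → ℝ) : Set (Set ℕ) := {S | Summable (S.indicator f)}

/-- `A` has asymptotic density `d`. -/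
def HasDensity (A : Set ℕ) (d : ℝ) : Prop :=
  Tendsto (fun n => (∑ i ∈ Finset.range n, A.indicator (fun _ => (1 : ℝ)) i) / (n : ℝ))
    atTop (𝓝 d)

/-- `A_B := {a_b : b ∈ B}`, where `a_0 < a_1 < ⋯` is the increasing enumeration of `A`. -/
def sel (A B : Set ℕ) : Set ℕ := (fun b => Nat.nth (· ∈ A) b) '' B

/-- `A ≤ B`: the increasing enumerations satisfy `a_n ≤ b_n` for all `n`. -/
def enumLE (A B : Set ℕ) : Prop := ∀ n : ℕ, Nat.nth (· ∈ A) n ≤ Nat.nth (· ∈ B) n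

/-- `I` is weakly thinnable: `A_B ∉ I` whenever `A` has non-zero asymptotic density
and `B ∉ I`. -/
def WeaklyThinnable (I : Set (Set ℕ)) : Prop :=
  ∀ A B : Set ℕ, (∃ d : ℝ, 0 < d ∧ HasDensity A d) → B ∉ I → sel A B ∉ I

/-- `I` is thinnable: weakly thinnable, and moreover `B_A ∉ I` under the same
hypotheses, and `X ∉ I` whenever `X ≤ Y` and `Y ∉ I`. -/
def Thinnable (I : Set (Set ℕ)) : Prop :=
  WeaklyThinnable I ∧
  (∀ A B : Set ℕ, (∃ d : ℝ, 0 < d ∧ HasDensity A d) → B ∉ I → sel B A ∉ I) ∧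
  (∀ X Y : Set ℕ, enumLE X Y → Y ∉ I → X ∉ I)

/-- The analytic P-ideal `I_φ` is strongly thinnable. -/
def StronglyThinnable (φ : LSCSubmeasure) : Prop :=
  WeaklyThinnable φ.ideal ∧
  (∀ q : ℝ, 0 < q → ∀ A : Set ℕ, ∀ a : ℝ, 0 < a → HasDensity A a →
    ∃ c : ℝ, 0 < c ∧ ∀ B : Set ℕ, ENNReal.ofReal q ≤ φ.norm B →
      ENNReal.ofReal (c * q) ≤ φ.norm (sel B A)) ∧
  (∃ c : ℝ, 0 < c ∧ ∀ X Y : Set ℕ, enumLE X Y →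
    ENNReal.ofReal c * φ.norm Y ≤ φ.norm X)

/-- The `i`-th digit (0-indexed, so this is `d_{i+1}(ω)`) of the non-terminating
dyadic expansion of `ω ∈ (0,1]`. -/
def dyadicDigit (ω : ℝ) (i : ℕ) : ℕ :=
  (⌈(2 : ℝ) ^ (i + 1) * ω⌉ - 2 * ⌈(2 : ℝ) ^ i * ω⌉ + 1).toNat

/-- `x↾ω`: the subsequence of `x` indexed by the set `{i : d_i(ω) = 1}`. -/
def subseq {X : Type*} (x : ℕ → X) (ω : ℝ) : ℕ → X :=
  fun k => x (Nat.nth (fun i => dyadicDigit ω i = 1) k)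

/-- The Erdős–Ulam ideal `E_f` associated with a weight `f`. -/
def ErdosUlamIdeal (f : ℕ → ℝ) : Set (Set ℕ) :=
  {S | Tendsto (fun n => (∑ i ∈ Finset.Icc 1 n, S.indicator f i) /
        (∑ i ∈ Finset.Icc 1 n, f i)) atTop (𝓝 0)}

/-- The upper `α`-density `d_α^⋆(S)`. -/
def upperAlphaDensity (α : ℝ) (S : Set ℕ) : ℝ :=
  limsup (fun n => (∑ i ∈ Finset.Icc 1 n, S.indicator (fun i => (i : ℝ) ^ α) i) /
    (∑ i ∈ Finset.Icc 1 n, (i : ℝ) ^ α)) atTop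

/-- `S` has `α`-asymptotic density `d`. -/
def HasAlphaDensity (α : ℝ) (S : Set ℕ) (d : ℝ) : Prop :=
  Tendsto (fun n => (∑ i ∈ Finset.Icc 1 n, S.indicator (fun i => (i : ℝ) ^ α) i) /
    (∑ i ∈ Finset.Icc 1 n, (i : ℝ) ^ α)) atTop (𝓝 d)

/-- The ideal `I_α` of sets of zero upper `α`-density. -/
def Ialpha (α : ℝ) : Set (Set ℕ) := {S | upperAlphaDensity α S = 0}


namespace S14

noncomputable def FF (f : ℕ → ℝ) (n : ℕ) : ℝ := ∑ i ∈ Finset.Ioc 0 n, f i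

lemma Icc_one (n : ℕ) : Finset.Icc 1 n = Finset.Ioc 0 n := Finset.Icc_add_one_left_eq_Ioc 0 n

variable {f : ℕ → ℝ}

lemma FF_nonneg (hpos : ∀ n, 0 < f n) (n : ℕ) : 0 ≤ FF f n :=
  Finset.sum_nonneg fun i _ => (hpos i).le

lemma FF_succ (n : ℕ) : FF f (n + 1) = FF f n + f (n + 1) :=
  Finset.sum_Ioc_succ_top (Nat.zero_le n) f

lemma FF_mono (hpos : ∀ n, 0 < f n) : Monotone (FF f) := fun a b hab =>
  Finset.sum_le_sum_of_subset_of_nonneg (Finset.Ioc_subset_Ioc le_rfl hab)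
    (fun i _ _ => (hpos i).le)

lemma FF_pos (hpos : ∀ n, 0 < f n) {n : ℕ} (hn : 0 < n) : 0 < FF f n :=
  Finset.sum_pos (fun i _ => hpos i) ⟨n, by simp [hn]⟩

lemma sum_range_FF (n : ℕ) : ∑ i ∈ Finset.range (n + 1), f i = f 0 + FF f n := by
  induction n with
  | zero => simp [FF]
  | succ n ih => rw [Finset.sum_range_succ, ih, FF_succ]; ring

lemma FF_atTop (hpos : ∀ n, 0 < f n) (hdiv : ¬ Summable f) :
    Tendsto (FF f) atTop atTop := by
  have h := (not_summable_iff_tendsto_nat_atTop_of_nonneg (fun n => (hpos n).le)).1 hdiv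
  have h2 : Tendsto (fun n => f 0 + FF f n) atTop atTop := by
    have h3 := h.comp (tendsto_add_atTop_nat 1)
    have : ((fun n => ∑ i ∈ Finset.range n, f i) ∘ fun a => a + 1) = fun n => f 0 + FF f n := by
      funext n; simp [Function.comp, sum_range_FF]
    rwa [this] at h3
  have := tendsto_atTop_add_const_left atTop (-(f 0)) h2
  simpa using this

lemma f_div_FF (hpos : ∀ n, 0 < f n)
    (hmono : ∃ N : ℕ, ∀ m n : ℕ, N ≤ m → m ≤ n → f n ≤ f m)
    (hdiv : ¬ Summable f) :
    Tendsto (fun n => f n / FF f n) atTop (𝓝 0) := by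
  obtain ⟨N, hN⟩ := hmono
  have hFF := FF_atTop hpos hdiv
  apply tendsto_of_tendsto_of_tendsto_of_le_of_le' (tendsto_const_nhds (x := (0:ℝ)))
    (tendsto_const_nhds.div_atTop hFF (f := fun _ => f N))
  · filter_upwards [eventually_ge_atTop 1] with n hn
    exact div_nonneg (hpos n).le (FF_pos hpos hn).le
  · filter_upwards [eventually_ge_atTop (max N 1), hFF.eventually_gt_atTop 0] with n hn hFn
    exact (div_le_div_iff_of_pos_right hFn).2 (hN N n le_rfl (le_trans (le_max_left N 1) hn))
    

lemma hex (hpos : ∀ n, 0 < f n) (hdiv : ¬ Summable f) (p : ℕ) :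
    ∃ m, p < m ∧ 2 * FF f p ≤ FF f m := by
  have := ((FF_atTop hpos hdiv).eventually_ge_atTop (2 * FF f p)).and
    (eventually_gt_atTop p)
  obtain ⟨m, hm1, hm2⟩ := this.exists
  exact ⟨m, hm2, hm1⟩

open Classical in
noncomputable def zf (f : ℕ → ℝ) (h : ∀ p : ℕ, ∃ m, p < m ∧ 2 * FF f p ≤ FF f m) : ℕ → ℕ
  | 0 => 1
  | n + 1 => Nat.find (h (zf f h n))

variable (h : ∀ p : ℕ, ∃ m, p < m ∧ 2 * FF f p ≤ FF f m)

open Classical in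
lemma zf_succ_spec (n : ℕ) : zf f h n < zf f h (n + 1) ∧
    2 * FF f (zf f h n) ≤ FF f (zf f h (n + 1)) := Nat.find_spec (h (zf f h n))

lemma zf_strictMono : StrictMono (zf f h) :=
  strictMono_nat_of_lt_succ fun n => (zf_succ_spec h n).1

lemma zf_pos (n : ℕ) : 0 < zf f h n := by
  induction n with
  | zero => exact Nat.one_pos
  | succ n ih => exact lt_trans ih (zf_succ_spec h n).1

open Classical in
lemma zf_min {n m : ℕ} (h1 : zf f h n < m) (h2 : m < zf f h (n + 1)) :
    FF f m < 2 * FF f (zf f h n) := by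
  have := Nat.find_min (h (zf f h n)) h2
  push_neg at this
  exact this h1

lemma FF_zf_pred (hpos : ∀ n, 0 < f n) (n : ℕ) :
    FF f (zf f h (n + 1) - 1) < 2 * FF f (zf f h n) := by
  rcases lt_or_eq_of_le (Nat.le_sub_one_of_lt (zf_succ_spec h n).1) with h1 | h1
  · exact zf_min h h1 (Nat.sub_lt (zf_pos h (n+1)) Nat.one_pos)
  · rw [← h1]
    have := FF_pos hpos (zf_pos h n)
    linarith

lemma FF_zf_upper (hpos : ∀ n, 0 < f n) (n : ℕ) :
    FF f (zf f h (n + 1)) < 2 * FF f (zf f h n) + f (zf f h (n + 1)) := by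
  have h1 : zf f h (n + 1) = (zf f h (n + 1) - 1) + 1 :=
    (Nat.succ_pred_eq_of_pos (zf_pos h (n+1))).symm
  calc FF f (zf f h (n + 1)) = FF f (zf f h (n+1) - 1) + f ((zf f h (n+1) - 1) + 1) := by
        rw [← FF_succ, ← h1]
    _ < 2 * FF f (zf f h n) + f (zf f h (n + 1)) := by
        rw [← h1]; exact add_lt_add_of_lt_of_le (FF_zf_pred h hpos n) le_rfl

lemma zf_atTop : Tendsto (zf f h) atTop atTop := (zf_strictMono h).tendsto_atTop


lemma sum_Ioc_zf (n : ℕ) : ∑ s ∈ Finset.Ioc (zf f h n) (zf f h (n + 1)), f s =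
    FF f (zf f h (n + 1)) - FF f (zf f h n) := by
  have := Finset.sum_Ioc_consecutive f (Nat.zero_le (zf f h n))
    (le_of_lt (zf_succ_spec h n).1)
  simp only [FF]; linarith

lemma delta_tendsto (hpos : ∀ n, 0 < f n)
    (hmono : ∃ N : ℕ, ∀ m n : ℕ, N ≤ m → m ≤ n → f n ≤ f m) (hdiv : ¬ Summable f) :
    Tendsto (fun n => f (zf f h (n + 1)) / FF f (zf f h (n + 1))) atTop (𝓝 0) := by
  have hz : Tendsto (fun n => zf f h (n + 1)) atTop atTop :=
    (zf_atTop h).comp (tendsto_add_atTop_nat 1)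
  exact (f_div_FF hpos hmono hdiv).comp hz

lemma FF_zf_four (hpos : ∀ n, 0 < f n) {n : ℕ}
    (hd : f (zf f h (n + 1)) / FF f (zf f h (n + 1)) ≤ 1 / 2) :
    FF f (zf f h (n + 1)) < 4 * FF f (zf f h n) := by
  have h1 := FF_zf_upper h hpos n
  have h2 : 0 < FF f (zf f h (n + 1)) := FF_pos hpos (zf_pos h _)
  have h3 : f (zf f h (n + 1)) ≤ (1 / 2) * FF f (zf f h (n + 1)) := by
    rw [div_le_div_iff₀ (by positivity) (by norm_num)] at hd; linarith
  linarith

lemma f_zf_le (hpos : ∀ n, 0 < f n) {n : ℕ}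
    (hd : f (zf f h (n + 1)) / FF f (zf f h (n + 1)) ≤ 1 / 2) :
    f (zf f h (n + 1)) ≤ 4 * (f (zf f h (n + 1)) / FF f (zf f h (n + 1))) * FF f (zf f h n) := by
  have h2 : 0 < FF f (zf f h (n + 1)) := FF_pos hpos (zf_pos h _)
  have h4 := FF_zf_four h hpos hd
  have he : f (zf f h (n + 1)) = (f (zf f h (n + 1)) / FF f (zf f h (n + 1))) *
      FF f (zf f h (n + 1)) := by field_simp
  have hd0 : 0 ≤ f (zf f h (n + 1)) / FF f (zf f h (n + 1)) :=
    div_nonneg (hpos _).le (FF_nonneg hpos _)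
  calc f (zf f h (n + 1)) = _ * FF f (zf f h (n + 1)) := he
    _ ≤ (f (zf f h (n + 1)) / FF f (zf f h (n + 1))) * (4 * FF f (zf f h n)) :=
        mul_le_mul_of_nonneg_left h4.le hd0
    _ = 4 * (f (zf f h (n + 1)) / FF f (zf f h (n + 1))) * FF f (zf f h n) := by ring

lemma ratio_tendsto (hpos : ∀ n, 0 < f n)
    (hmono : ∃ N : ℕ, ∀ m n : ℕ, N ≤ m → m ≤ n → f n ≤ f m) (hdiv : ¬ Summable f) :
    Tendsto (fun n => (∑ s ∈ Finset.Ioc (zf f h n) (zf f h (n + 1)), f s) /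
      FF f (zf f h n)) atTop (𝓝 1) := by
  set d : ℕ → ℝ := fun n => f (zf f h (n + 1)) / FF f (zf f h (n + 1)) with hd
  have hδ : Tendsto d atTop (𝓝 0) := delta_tendsto h hpos hmono hdiv
  have hup : Tendsto (fun n => 1 + 4 * d n) atTop (𝓝 1) := by
    have := tendsto_const_nhds (x := (1:ℝ)) (f := atTop (α := ℕ)) |>.add (hδ.const_mul 4)
    simpa using this
  apply tendsto_of_tendsto_of_tendsto_of_le_of_le' (tendsto_const_nhds (x := (1:ℝ))) hup
  · filter_upwards with n
    have hp : 0 < FF f (zf f h n) := FF_pos hpos (zf_pos h _)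
    rw [sum_Ioc_zf h, le_div_iff₀ hp]
    have := (zf_succ_spec h n).2
    linarith
  · filter_upwards [hδ.eventually (gt_mem_nhds (by norm_num : (0:ℝ) < 1/2))] with n hn
    have hp : 0 < FF f (zf f h n) := FF_pos hpos (zf_pos h _)
    rw [sum_Ioc_zf h, div_le_iff₀ hp]
    have h1 := FF_zf_upper h hpos n
    have h2 := f_zf_le h hpos hn.le
    have hd0 : 0 ≤ d n := div_nonneg (hpos _).le (FF_nonneg hpos _)
    nlinarith


variable (z : ℕ → ℕ)

noncomputable def BB (f : ℕ → ℝ) (z : ℕ → ℕ) (S : Set ℕ) (n : ℕ) : ℝ :=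
  ∑ s ∈ Finset.Ioc (z n) (z (n + 1)), S.indicator f s

noncomputable def rr (f : ℕ → ℝ) (z : ℕ → ℕ) (S : Set ℕ) (n : ℕ) : ℝ :=
  BB f z S n / FF f (z (n + 1))

noncomputable def phiFun (f : ℕ → ℝ) (z : ℕ → ℕ) (S : Set ℕ) : ENNReal :=
  ⨆ n, ENNReal.ofReal (rr f z S n)

lemma ind_nonneg (hpos : ∀ n, 0 < f n) (S : Set ℕ) (i : ℕ) : 0 ≤ S.indicator f i :=
  Set.indicator_nonneg (fun i _ => (hpos i).le) i

lemma ind_le (hpos : ∀ n, 0 < f n) (S : Set ℕ) (i : ℕ) : S.indicator f i ≤ f i :=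
  Set.indicator_le_self' (fun i _ => (hpos i).le) i

lemma BB_nonneg (hpos : ∀ n, 0 < f n) (S : Set ℕ) (n : ℕ) : 0 ≤ BB f z S n :=
  Finset.sum_nonneg fun i _ => ind_nonneg hpos S i

lemma BB_le (hpos : ∀ n, 0 < f n) (S : Set ℕ) (n : ℕ) : BB f z S n ≤ FF f (z (n + 1)) := by
  calc BB f z S n ≤ ∑ s ∈ Finset.Ioc (z n) (z (n + 1)), f s :=
        Finset.sum_le_sum fun i _ => ind_le hpos S i
    _ ≤ FF f (z (n + 1)) := Finset.sum_le_sum_of_subset_of_nonneg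
        (Finset.Ioc_subset_Ioc (Nat.zero_le _) le_rfl) (fun i _ _ => (hpos i).le)

lemma rr_nonneg (hpos : ∀ n, 0 < f n) (S : Set ℕ) (n : ℕ) : 0 ≤ rr f z S n :=
  div_nonneg (BB_nonneg z hpos S n) (FF_nonneg hpos _)

lemma rr_le_one (hpos : ∀ n, 0 < f n) (hz1 : ∀ n, 0 < z n) (S : Set ℕ) (n : ℕ) :
    rr f z S n ≤ 1 := by
  rw [rr, div_le_one (FF_pos hpos (hz1 (n+1)))]
  exact BB_le z hpos S n

lemma BB_mono (hpos : ∀ n, 0 < f n) {S T : Set ℕ} (hST : S ⊆ T) (n : ℕ) :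
    BB f z S n ≤ BB f z T n :=
  Finset.sum_le_sum fun i _ => Set.indicator_le_indicator_of_subset hST (fun i => (hpos i).le) i

lemma div_le_div_nn {a b c : ℝ} (hab : a ≤ b) (hc : 0 ≤ c) : a / c ≤ b / c := by
  rcases eq_or_lt_of_le hc with h0 | h0
  · simp [← h0]
  · exact (div_le_div_iff_of_pos_right h0).2 hab

lemma rr_mono (hpos : ∀ n, 0 < f n) {S T : Set ℕ} (hST : S ⊆ T) (n : ℕ) :
    rr f z S n ≤ rr f z T n :=
  div_le_div_nn (BB_mono z hpos hST n) (FF_nonneg hpos _)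

lemma BB_congr {S T : Set ℕ} {n : ℕ}
    (hST : ∀ s, z n < s → s ≤ z (n + 1) → (s ∈ S ↔ s ∈ T)) :
    BB f z S n = BB f z T n := by
  apply Finset.sum_congr rfl
  intro s hs
  rw [Finset.mem_Ioc] at hs
  by_cases hm : s ∈ S
  · rw [Set.indicator_of_mem hm, Set.indicator_of_mem ((hST s hs.1 hs.2).1 hm)]
  · rw [Set.indicator_of_notMem hm,
      Set.indicator_of_notMem (fun hc => hm ((hST s hs.1 hs.2).2 hc))]

lemma ind_union_le (hpos : ∀ n, 0 < f n) (A B : Set ℕ) (x : ℕ) :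
    (A ∪ B).indicator f x ≤ A.indicator f x + B.indicator f x := by
  by_cases hA : x ∈ A
  · rw [Set.indicator_of_mem (Set.mem_union_left _ hA), Set.indicator_of_mem hA]
    exact le_add_of_nonneg_right (ind_nonneg hpos B x)
  by_cases hB : x ∈ B
  · rw [Set.indicator_of_mem (Set.mem_union_right _ hB), Set.indicator_of_notMem hA,
      Set.indicator_of_mem hB]
    simp
  · rw [Set.indicator_of_notMem hA, Set.indicator_of_notMem hB,
      Set.indicator_of_notMem (fun hc => hc.elim hA hB)]
    simp

noncomputable def phi (f : ℕ → ℝ) (z : ℕ → ℕ) (hpos : ∀ n, 0 < f n) (hz : StrictMono z)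
    (hz1 : ∀ n, 0 < z n) : LSCSubmeasure where
  toFun := phiFun f z
  empty' := by
    simp [phiFun, rr, BB]
  singleton_lt_top' := fun m => by
    apply lt_of_le_of_lt (b := 1) _ ENNReal.one_lt_top
    exact iSup_le fun n => ENNReal.ofReal_le_one.2 (rr_le_one z hpos hz1 _ n)
  mono' := fun A B hAB =>
    iSup_mono fun n => ENNReal.ofReal_le_ofReal (rr_mono z hpos hAB n)
  subadd' := fun A B => by
    apply iSup_le fun n => ?_
    have h1 : rr f z (A ∪ B) n ≤ rr f z A n + rr f z B n := by
      rw [rr, rr, rr, ← add_div]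
      apply div_le_div_nn _ (FF_nonneg hpos _)
      calc BB f z (A ∪ B) n ≤ ∑ i ∈ Finset.Ioc (z n) (z (n + 1)),
            (A.indicator f i + B.indicator f i) :=
            Finset.sum_le_sum fun i _ => ind_union_le hpos A B i
        _ = BB f z A n + BB f z B n := Finset.sum_add_distrib
    calc ENNReal.ofReal (rr f z (A ∪ B) n) ≤ ENNReal.ofReal (rr f z A n + rr f z B n) :=
          ENNReal.ofReal_le_ofReal h1
      _ ≤ ENNReal.ofReal (rr f z A n) + ENNReal.ofReal (rr f z B n) := ENNReal.ofReal_add_le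
      _ ≤ phiFun f z A + phiFun f z B := add_le_add
          (le_iSup (fun k => ENNReal.ofReal (rr f z A k)) n)
          (le_iSup (fun k => ENNReal.ofReal (rr f z B k)) n)
  lsc' := fun A => by
    have hmono : Monotone (fun m => phiFun f z (A ∩ {k | k < m})) := by
      intro a b hab
      exact iSup_mono fun n => ENNReal.ofReal_le_ofReal (rr_mono z hpos
        (Set.inter_subset_inter_right _ (fun x hx => lt_of_lt_of_le hx hab)) n)
    have heq : (⨆ m, phiFun f z (A ∩ {k | k < m})) = phiFun f z A := by
      apply le_antisymm
      · exact iSup_le fun m => iSup_mono fun n =>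
          ENNReal.ofReal_le_ofReal (rr_mono z hpos Set.inter_subset_left n)
      · apply iSup_le fun n => ?_
        have hc : rr f z A n = rr f z (A ∩ {k | k < z (n + 1) + 1}) n := by
          rw [rr, rr, BB_congr]
          intro s hs1 hs2
          simp only [Set.mem_inter_iff, Set.mem_setOf_eq]
          exact ⟨fun hA => ⟨hA, Nat.lt_succ_of_le hs2⟩, fun hA => hA.1⟩
        calc ENNReal.ofReal (rr f z A n)
            = ENNReal.ofReal (rr f z (A ∩ {k | k < z (n + 1) + 1}) n) := by rw [hc]
          _ ≤ phiFun f z (A ∩ {k | k < z (n + 1) + 1}) :=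
              le_iSup (fun k => ENNReal.ofReal (rr f z (A ∩ {k | k < z (n + 1) + 1}) k)) n
          _ ≤ ⨆ m, phiFun f z (A ∩ {k | k < m}) := le_iSup
              (fun m => phiFun f z (A ∩ {k | k < m})) (z (n + 1) + 1)
    rw [← heq]
    exact tendsto_atTop_iSup hmono


lemma rr_bddAbove (hpos : ∀ n, 0 < f n) (hz1 : ∀ n, 0 < z n) (S : Set ℕ) :
    IsBoundedUnder (· ≤ ·) atTop (rr f z S) :=
  isBoundedUnder_of ⟨1, fun n => rr_le_one z hpos hz1 S n⟩

lemma rr_bddBelow (hpos : ∀ n, 0 < f n) (S : Set ℕ) :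
    IsBoundedUnder (· ≥ ·) atTop (rr f z S) :=
  isBoundedUnder_of ⟨0, fun n => rr_nonneg z hpos S n⟩

lemma limsup_rr_nonneg (hpos : ∀ n, 0 < f n) (hz1 : ∀ n, 0 < z n) (S : Set ℕ) :
    0 ≤ limsup (rr f z S) atTop :=
  le_limsup_of_frequently_le
    ((Filter.Eventually.of_forall fun n => rr_nonneg z hpos S n).frequently)
    (rr_bddAbove z hpos hz1 S)

lemma norm_phi (hpos : ∀ n, 0 < f n) (hz : StrictMono z) (hz1 : ∀ n, 0 < z n) (S : Set ℕ) :
    (phi f z hpos hz hz1).norm S = ENNReal.ofReal (limsup (rr f z S) atTop) := by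
  set L : ℝ := limsup (rr f z S) atTop with hLdef
  have hbdd := rr_bddAbove z hpos hz1 S
  have hcob : IsCoboundedUnder (· ≤ ·) atTop (rr f z S) :=
    (rr_bddBelow z hpos S).isCoboundedUnder_le
  show (⨅ m : ℕ, phiFun f z (S \ {k | k < m})) = ENNReal.ofReal L
  apply le_antisymm
  · apply ENNReal.le_of_forall_pos_le_add
    intro ε hε _
    have hε' : (0:ℝ) < (ε:ℝ) := hε
    have hev : ∀ᶠ n in atTop, rr f z S n < L + ε :=
      eventually_lt_of_limsup_lt (by linarith) hbdd
    obtain ⟨N, hN⟩ := eventually_atTop.1 hev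
    refine le_trans (iInf_le _ (z N + 1)) (iSup_le fun n => ?_)
    by_cases hn : N ≤ n
    · have h1 : rr f z (S \ {k | k < z N + 1}) n ≤ rr f z S n :=
        rr_mono z hpos Set.diff_subset n
      calc ENNReal.ofReal (rr f z (S \ {k | k < z N + 1}) n)
          ≤ ENNReal.ofReal (L + ε) :=
            ENNReal.ofReal_le_ofReal (le_of_lt (lt_of_le_of_lt h1 (hN n hn)))
        _ ≤ ENNReal.ofReal L + ENNReal.ofReal ε := ENNReal.ofReal_add_le
        _ = ENNReal.ofReal L + ε := by rw [ENNReal.ofReal_coe_nnreal]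
    · have hB : BB f z (S \ {k | k < z N + 1}) n = 0 := by
        apply Finset.sum_eq_zero
        intro s hs
        rw [Finset.mem_Ioc] at hs
        apply Set.indicator_of_notMem
        intro hc
        have : s ≤ z N := le_trans hs.2 (hz.monotone (Nat.succ_le_of_lt (not_le.1 hn)))
        exact hc.2 (Nat.lt_succ_of_le this)
      rw [rr, hB, zero_div, ENNReal.ofReal_zero]
      exact bot_le
  · refine le_iInf fun m => ?_
    apply ENNReal.le_of_forall_pos_le_add
    intro ε hε _
    have hε' : (0:ℝ) < (ε:ℝ) := hε
    have hfreq : ∃ᶠ n in atTop, L - ε < rr f z S n :=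
      frequently_lt_of_lt_limsup hcob (by linarith)
    obtain ⟨n, hn1, hn2⟩ := (hfreq.and_eventually (eventually_ge_atTop m)).exists
    have hcongr : rr f z (S \ {k | k < m}) n = rr f z S n := by
      rw [rr, rr, BB_congr]
      intro s hs1 _
      have hsm : ¬ s < m := by
        have : m ≤ z n := le_trans (hz.le_apply) (hz.monotone hn2)
        omega
      exact ⟨fun hc => hc.1, fun hc => ⟨hc, hsm⟩⟩
    calc ENNReal.ofReal L = ENNReal.ofReal ((L - ε) + ε) := by rw [sub_add_cancel]
      _ ≤ ENNReal.ofReal (L - ε) + ENNReal.ofReal ε := ENNReal.ofReal_add_le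
      _ ≤ phiFun f z (S \ {k | k < m}) + ↑ε := by
          apply add_le_add _ (le_of_eq ENNReal.ofReal_coe_nnreal)
          calc ENNReal.ofReal (L - ε) ≤ ENNReal.ofReal (rr f z (S \ {k | k < m}) n) := by
                rw [hcongr]; exact ENNReal.ofReal_le_ofReal hn1.le
            _ ≤ phiFun f z (S \ {k | k < m}) :=
                le_iSup (fun k => ENNReal.ofReal (rr f z (S \ {k | k < m}) k)) n


lemma tele (S : Set ℕ) (a : ℕ) : ∀ b, a ≤ b →
    (∑ i ∈ Finset.Ioc 0 (zf f h a), S.indicator f i) +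
      ∑ j ∈ Finset.Ico a b, BB f (zf f h) S j =
    ∑ i ∈ Finset.Ioc 0 (zf f h b), S.indicator f i := by
  intro b hb
  induction b, hb using Nat.le_induction with
  | base => simp
  | succ b hb ih =>
    rw [Finset.sum_Ico_succ_top hb, ← add_assoc, ih]
    exact Finset.sum_Ioc_consecutive _ (Nat.zero_le _) (le_of_lt (zf_succ_spec h b).1)

lemma geom (hpos : ∀ n, 0 < f n) : ∀ k : ℕ,
    ∑ j ∈ Finset.range k, FF f (zf f h (j + 1)) ≤ 2 * FF f (zf f h k) := by
  intro k
  induction k with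
  | zero => simpa using FF_nonneg hpos (zf f h 0)
  | succ k ih =>
    rw [Finset.sum_range_succ]
    have := (zf_succ_spec h k).2
    linarith

lemma exists_block {n K : ℕ} (hn : zf f h K ≤ n) :
    ∃ k, K ≤ k ∧ zf f h k ≤ n ∧ n < zf f h (k + 1) := by
  classical
  set P : ℕ → Prop := fun j => zf f h j ≤ n with hP
  have hKn : K ≤ n := le_trans (zf_strictMono h).le_apply hn
  refine ⟨Nat.findGreatest P n, Nat.le_findGreatest hKn hn,
    Nat.findGreatest_spec (m := K) (P := P) hKn hn, ?_⟩
  by_cases hc : Nat.findGreatest P n + 1 ≤ n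
  · have := Nat.findGreatest_is_greatest (Nat.lt_succ_self _) hc
    simpa [hP, not_le] using this
  · push_neg at hc
    exact lt_of_lt_of_le hc (zf_strictMono h).le_apply

lemma EU_of_rr (hpos : ∀ n, 0 < f n)
    (hmono : ∃ N : ℕ, ∀ m n : ℕ, N ≤ m → m ≤ n → f n ≤ f m) (hdiv : ¬ Summable f)
    (S : Set ℕ) (hr : Tendsto (rr f (zf f h) S) atTop (𝓝 0)) :
    Tendsto (fun n => (∑ i ∈ Finset.Ioc 0 n, S.indicator f i) / FF f n) atTop (𝓝 0) := by
  rw [tendsto_order]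
  constructor
  · intro a ha
    filter_upwards [eventually_ge_atTop 1] with n hn
    have : 0 ≤ (∑ i ∈ Finset.Ioc 0 n, S.indicator f i) / FF f n :=
      div_nonneg (Finset.sum_nonneg fun i _ => ind_nonneg hpos S i) (FF_nonneg hpos n)
    linarith
  · intro ε hε
    set ε' : ℝ := ε / 8 with hε'def
    have hε' : 0 < ε' := by positivity
    have h1 : ∀ᶠ j in atTop, rr f (zf f h) S j < ε' :=
      hr.eventually (gt_mem_nhds hε')
    have h2 : ∀ᶠ j in atTop,
        f (zf f h (j + 1)) / FF f (zf f h (j + 1)) < 1 / 2 :=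
      (delta_tendsto h hpos hmono hdiv).eventually (gt_mem_nhds (by norm_num))
    obtain ⟨K₁, hK₁⟩ := eventually_atTop.1 h1
    obtain ⟨K₂, hK₂⟩ := eventually_atTop.1 h2
    set K := max K₁ K₂ with hKdef
    set C : ℝ := ∑ i ∈ Finset.Ioc 0 (zf f h K), S.indicator f i with hCdef
    have hBB : ∀ j, K ≤ j → BB f (zf f h) S j ≤ ε' * FF f (zf f h (j + 1)) := by
      intro j hj
      have := hK₁ j (le_trans (le_max_left _ _) hj)
      rw [rr, div_lt_iff₀ (FF_pos hpos (zf_pos h _))] at this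
      linarith
    have hF4 : ∀ j, K ≤ j → FF f (zf f h (j + 1)) ≤ 4 * FF f (zf f h j) := by
      intro j hj
      exact (FF_zf_four h hpos (hK₂ j (le_trans (le_max_right _ _) hj)).le).le
    filter_upwards [eventually_ge_atTop (zf f h K),
      (FF_atTop hpos hdiv).eventually_gt_atTop (C / ε'),
      eventually_ge_atTop 1] with n hn hFn hn1
    obtain ⟨k, hKk, hk1, hk2⟩ := exists_block h hn
    have hFnpos : 0 < FF f n := FF_pos hpos hn1
    rw [div_lt_iff₀ hFnpos]
    have hFFn : FF f (zf f h k) ≤ FF f n := FF_mono hpos hk1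
    -- decomposition
    have hdec : (∑ i ∈ Finset.Ioc 0 n, S.indicator f i) =
        (∑ i ∈ Finset.Ioc 0 (zf f h k), S.indicator f i) +
        ∑ i ∈ Finset.Ioc (zf f h k) n, S.indicator f i :=
      (Finset.sum_Ioc_consecutive _ (Nat.zero_le _) hk1).symm
    -- tail bound
    have hT2 : (∑ i ∈ Finset.Ioc (zf f h k) n, S.indicator f i) ≤ 4 * ε' * FF f n := by
      calc (∑ i ∈ Finset.Ioc (zf f h k) n, S.indicator f i) ≤ BB f (zf f h) S k :=
            Finset.sum_le_sum_of_subset_of_nonneg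
              (Finset.Ioc_subset_Ioc le_rfl hk2.le) (fun i _ _ => ind_nonneg hpos S i)
        _ ≤ ε' * FF f (zf f h (k + 1)) := hBB k hKk
        _ ≤ ε' * (4 * FF f (zf f h k)) :=
            mul_le_mul_of_nonneg_left (hF4 k hKk) hε'.le
        _ ≤ 4 * ε' * FF f n := by nlinarith
    -- main bound
    have hT1 : (∑ i ∈ Finset.Ioc 0 (zf f h k), S.indicator f i) ≤ C + 2 * ε' * FF f n := by
      rw [← tele h S K k hKk]
      have hsum : (∑ j ∈ Finset.Ico K k, BB f (zf f h) S j) ≤ 2 * ε' * FF f n := by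
        calc (∑ j ∈ Finset.Ico K k, BB f (zf f h) S j)
            ≤ ∑ j ∈ Finset.Ico K k, ε' * FF f (zf f h (j + 1)) :=
              Finset.sum_le_sum fun j hj => hBB j (Finset.mem_Ico.1 hj).1
          _ = ε' * ∑ j ∈ Finset.Ico K k, FF f (zf f h (j + 1)) := by
              rw [Finset.mul_sum]
          _ ≤ ε' * ∑ j ∈ Finset.range k, FF f (zf f h (j + 1)) := by
              apply mul_le_mul_of_nonneg_left _ hε'.le
              apply Finset.sum_le_sum_of_subset_of_nonneg
              · intro j hj
                rw [Finset.mem_range]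
                exact (Finset.mem_Ico.1 hj).2
              · exact fun i _ _ => FF_nonneg hpos _
          _ ≤ ε' * (2 * FF f (zf f h k)) :=
              mul_le_mul_of_nonneg_left (geom h hpos k) hε'.le
          _ ≤ 2 * ε' * FF f n := by nlinarith
      linarith
    have hC : C < ε' * FF f n := by
      rw [div_lt_iff₀ hε'] at hFn
      linarith [hFn]
    have : (∑ i ∈ Finset.Ioc 0 n, S.indicator f i) < 7 * ε' * FF f n := by
      rw [hdec]; linarith
    calc (∑ i ∈ Finset.Ioc 0 n, S.indicator f i) < 7 * ε' * FF f n := this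
      _ ≤ ε * FF f n := by rw [hε'def]; nlinarith

lemma rr_of_EU (hpos : ∀ n, 0 < f n) (S : Set ℕ)
    (hg : Tendsto (fun n => (∑ i ∈ Finset.Ioc 0 n, S.indicator f i) / FF f n)
      atTop (𝓝 0)) :
    Tendsto (rr f (zf f h) S) atTop (𝓝 0) := by
  have hz : Tendsto (fun k => zf f h (k + 1)) atTop atTop :=
    (zf_atTop h).comp (tendsto_add_atTop_nat 1)
  apply tendsto_of_tendsto_of_tendsto_of_le_of_le'
    (tendsto_const_nhds (x := (0:ℝ))) (hg.comp hz)
  · exact Filter.Eventually.of_forall fun k => rr_nonneg _ hpos S k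
  · filter_upwards with k
    apply div_le_div_nn _ (FF_nonneg hpos _)
    exact Finset.sum_le_sum_of_subset_of_nonneg
      (Finset.Ioc_subset_Ioc (Nat.zero_le _) le_rfl) (fun i _ _ => ind_nonneg hpos S i)

lemma tendsto_rr_iff_limsup (hpos : ∀ n, 0 < f n) (hz1 : ∀ n, 0 < z n) (S : Set ℕ) :
    Tendsto (rr f z S) atTop (𝓝 0) ↔ limsup (rr f z S) atTop = 0 := by
  constructor
  · exact fun ht => ht.limsup_eq
  · intro hl
    apply tendsto_of_liminf_eq_limsup _ hl (rr_bddAbove z hpos hz1 S) (rr_bddBelow z hpos S)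
    apply le_antisymm
    · rw [← hl]
      exact liminf_le_limsup (rr_bddAbove z hpos hz1 S) (rr_bddBelow z hpos S)
    · exact le_liminf_of_le (rr_bddAbove z hpos hz1 S).isCoboundedUnder_ge
        (Filter.Eventually.of_forall fun n => rr_nonneg z hpos S n)

end S14

/-- For an eventually non-increasing `f : ℕ → (0,∞)` with divergent sum,
there are a lower semicontinuous submeasure `φ` with `E_f = I_φ` and a strictly increasing
sequence of positive integers `(z_n)` such that
`lim_n (∑_{s ∈ (z_n, z_{n+1}]} f(s))/(∑_{s ∈ [1,z_n]} f(s)) = 1` and, for all `S ⊆ ℕ`,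
`‖S‖_φ = limsup_n (∑_{s ∈ S ∩ (z_n, z_{n+1}]} f(s))/(∑_{s ∈ [1,z_{n+1}]} f(s))`. -/
theorem stmt14 (f : ℕ → ℝ) (hpos : ∀ n, 0 < f n)
    (hmono : ∃ N : ℕ, ∀ m n : ℕ, N ≤ m → m ≤ n → f n ≤ f m)
    (hdiv : ¬ Summable f) :
    ∃ (φ : LSCSubmeasure) (z : ℕ → ℕ), StrictMono z ∧ (∀ n, 0 < z n) ∧
      φ.ideal = ErdosUlamIdeal f ∧
      Tendsto (fun n => (∑ s ∈ Finset.Ioc (z n) (z (n + 1)), f s) /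
        (∑ s ∈ Finset.Icc 1 (z n), f s)) atTop (𝓝 1) ∧
      ∀ S : Set ℕ, φ.norm S = ENNReal.ofReal (limsup (fun n =>
        (∑ s ∈ Finset.Ioc (z n) (z (n + 1)), S.indicator f s) /
        (∑ s ∈ Finset.Icc 1 (z (n + 1)), f s)) atTop) := by
  have hx : ∀ p : ℕ, ∃ m, p < m ∧ 2 * S14.FF f p ≤ S14.FF f m := S14.hex hpos hdiv
  refine ⟨S14.phi f (S14.zf f hx) hpos (S14.zf_strictMono hx) (S14.zf_pos hx), S14.zf f hx,
    S14.zf_strictMono hx, S14.zf_pos hx, ?_, ?_, ?_⟩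
  · ext S
    show (S14.phi f (S14.zf f hx) hpos _ _).norm S = 0 ↔ _
    rw [S14.norm_phi, ENNReal.ofReal_eq_zero]
    have hL0 := S14.limsup_rr_nonneg (S14.zf f hx) hpos (S14.zf_pos hx) S
    constructor
    · intro hle
      have hl : limsup (S14.rr f (S14.zf f hx) S) atTop = 0 := le_antisymm hle hL0
      have ht := (S14.tendsto_rr_iff_limsup (S14.zf f hx) hpos (S14.zf_pos hx) S).2 hl
      have hEU := S14.EU_of_rr hx hpos hmono hdiv S ht
      show Tendsto _ atTop (𝓝 0)
      simp only [S14.Icc_one]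
      simpa [S14.FF] using hEU
    · intro hS
      have hEU : Tendsto (fun n => (∑ i ∈ Finset.Ioc 0 n, S.indicator f i) / S14.FF f n)
          atTop (𝓝 0) := by
        have : Tendsto (fun n => (∑ i ∈ Finset.Icc 1 n, S.indicator f i) /
            (∑ i ∈ Finset.Icc 1 n, f i)) atTop (𝓝 0) := hS
        simp only [S14.Icc_one] at this
        simpa [S14.FF] using this
      have ht := S14.rr_of_EU hx hpos S hEU
      rw [(S14.tendsto_rr_iff_limsup (S14.zf f hx) hpos (S14.zf_pos hx) S).1 ht]
  · have := S14.ratio_tendsto hx hpos hmono hdiv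
    simp only [S14.Icc_one]
    simpa [S14.FF] using this
  · intro S
    have hn := S14.norm_phi (S14.zf f hx) hpos (S14.zf_strictMono hx) (S14.zf_pos hx) S
    have hfun : (fun n => (∑ s ∈ Finset.Ioc (S14.zf f hx n) (S14.zf f hx (n + 1)),
        S.indicator f s) / (∑ s ∈ Finset.Icc 1 (S14.zf f hx (n + 1)), f s)) =
        S14.rr f (S14.zf f hx) S := by
      funext n
      rw [S14.Icc_one]
      rfl
    rw [hfun]
    exact hn
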